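/- Suppose in addition that u_T satisfies the Oleinik condition (O) at T. Then the set-valued map M is surjective: ⋃_{x ∈ ℝ} M(x) = ℝ, i.e. for every ξ ∈ ℝ there exists x ∈ ℝ with ξ ∈ M(x). -/

import Mathlib

open Filter MeasureTheory

/-- Condition (f): `f` is `C²`, strongly convex (`f'' > 0` everywhere), and
`f' → ∓∞` at `∓∞`. -/
def CondF (f : ℝ → ℝ) : Prop :=
  ContDiff ℝ 2 f ∧ (∀ x, 0 < deriv (deriv f) x) ∧
    Tendsto (deriv f) atBot atBot ∧ Tendsto (deriv f) atTop atTop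

/-- The Legendre transform `f*(y) = sup_x (y·x − f(x))`. -/
noncomputable def legendre (f : ℝ → ℝ) (y : ℝ) : ℝ :=
  sSup (Set.range fun x => y * x - f x)

/-- `U_T(x) = ∫_{x̌}^x u_T`. -/
noncomputable def UT (uT : ℝ → ℝ) (xc x : ℝ) : ℝ := ∫ ξ in xc..x, uT ξ

/-- `U_o^♭(x) = sup_ξ [U_T(ξ) − T f*((ξ−x)/T)]`. -/
noncomputable def Uflat (f : ℝ → ℝ) (T : ℝ) (uT : ℝ → ℝ) (xc x : ℝ) : ℝ :=
  sSup (Set.range fun ξ => UT uT xc ξ - T * legendre f ((ξ - x) / T))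

/-- `M(x)`: the set of maximizers in the definition of `U_o^♭(x)`. -/
def MSet (f : ℝ → ℝ) (T : ℝ) (uT : ℝ → ℝ) (xc x : ℝ) : Set ℝ :=
  {ξ | UT uT xc ξ = Uflat f T uT xc x + T * legendre f ((ξ - x) / T)}

/-- Oleinik condition (O) at `T`. -/
def Oleinik (f : ℝ → ℝ) (T : ℝ) (uT : ℝ → ℝ) : Prop :=
  ∀ x Δ : ℝ, 0 < Δ → deriv f (uT (x + Δ)) - deriv f (uT x) ≤ Δ / T

/-- The Hopf–Lax operator at time `T`: `(S_T U)(x) = inf_ξ [U(ξ) + T f*((x−ξ)/T)]`. -/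
noncomputable def HopfLax (f : ℝ → ℝ) (T : ℝ) (U : ℝ → ℝ) (x : ℝ) : ℝ :=
  sInf (Set.range fun ξ => U ξ + T * legendre f ((x - ξ) / T))

/-- Left continuity of a real function. -/
def LeftCts (u : ℝ → ℝ) : Prop :=
  ∀ x, Tendsto u (nhdsWithin x (Set.Iio x)) (nhds (u x))

/-- `II_T(U_T; J)`: Lipschitz functions with a.e. derivative in `J` evolving into `U_T`
under the Hopf–Lax semigroup. -/
def IIT (f : ℝ → ℝ) (T : ℝ) (uT : ℝ → ℝ) (xc : ℝ) (J : Set ℝ) : Set (ℝ → ℝ) :=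
  {U | (∃ K, LipschitzWith K U) ∧ (∀ᵐ x ∂volume, deriv U x ∈ J) ∧
    ∀ x, HopfLax f T U x = UT uT xc x}

/-- `U_o^♯(x) = sup { U(x) : U ∈ II_T(U_T; J) }`. -/
noncomputable def Usharp (f : ℝ → ℝ) (T : ℝ) (uT : ℝ → ℝ) (xc : ℝ) (J : Set ℝ) (x : ℝ) : ℝ :=
  sSup ((fun U : ℝ → ℝ => U x) '' IIT f T uT xc J)

lemma condF_facts (f : ℝ → ℝ) (hf : CondF f) : ∃ g : ℝ → ℝ,
    Continuous g ∧ Monotone g ∧ (∀ x, g (deriv f x) = x) ∧ (∀ y, deriv f (g y) = y) ∧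
    (∀ y, legendre f y = y * g y - f (g y)) ∧
    (∀ y, HasDerivAt (legendre f) (g y) y) := by
  obtain ⟨hC2, hpos, hbot, htop⟩ := hf
  have hdf : Differentiable ℝ f := hC2.differentiable (by norm_num)
  have h2 : ContDiff ℝ (1 + 1) f := by
    rw [show ((1:WithTop ℕ∞)+1) = 2 by norm_num]; exact hC2
  have hC1 : ContDiff ℝ 1 (deriv f) := (contDiff_succ_iff_deriv.mp h2).2.2
  have hdf' : Differentiable ℝ (deriv f) := hC1.differentiable one_ne_zero
  have hcont' : Continuous (deriv f) := hdf'.continuous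
  have hsm : StrictMono (deriv f) := strictMono_of_deriv_pos hpos
  have hsurj : Function.Surjective (deriv f) := hcont'.surjective htop hbot
  let e : ℝ ≃o ℝ := hsm.orderIsoOfSurjective _ hsurj
  have tangent : ∀ a x : ℝ, deriv f a * (x - a) + f a ≤ f x := by
    intro a x
    rcases lt_trichotomy a x with h | h | h
    · obtain ⟨c, hc, hc2⟩ := exists_hasDerivAt_eq_slope f (deriv f) h
        hdf.continuous.continuousOn (fun y _ => (hdf y).hasDerivAt)
    -- deriv f c = (f x - f a)/(x - a)
      have hxa : x - a ≠ 0 := sub_ne_zero.mpr h.ne'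
      rw [eq_div_iff hxa] at hc2
      have hle : deriv f a ≤ deriv f c := (hsm.le_iff_le).mpr hc.1.le
      nlinarith [sub_pos.mpr h]
    · subst h; simp
    · obtain ⟨c, hc, hc2⟩ := exists_hasDerivAt_eq_slope f (deriv f) h
        hdf.continuous.continuousOn (fun y _ => (hdf y).hasDerivAt)
      have hxa : a - x ≠ 0 := sub_ne_zero.mpr h.ne'
      rw [eq_div_iff hxa] at hc2
      have hle : deriv f c ≤ deriv f a := (hsm.le_iff_le).mpr hc.2.le
      nlinarith [sub_pos.mpr h]
  have hform : ∀ y, legendre f y = y * e.symm y - f (e.symm y) := by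
    intro y
    have hub : ∀ x : ℝ, y * x - f x ≤ y * e.symm y - f (e.symm y) := by
      intro x
      have := tangent (e.symm y) x
      have hy : deriv f (e.symm y) = y := e.apply_symm_apply y
      rw [hy] at this; linarith
    have hbdd : BddAbove (Set.range fun x => y * x - f x) := by
      refine ⟨y * e.symm y - f (e.symm y), ?_⟩
      rintro v ⟨x, rfl⟩; exact hub x
    exact le_antisymm (csSup_le (Set.range_nonempty _) (by rintro v ⟨x, rfl⟩; exact hub x))
      (le_csSup hbdd ⟨e.symm y, rfl⟩)
  have hderiv : ∀ y, HasDerivAt (legendre f) (e.symm y) y := by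
    intro y
    have hg' : HasDerivAt e.symm (deriv (deriv f) (e.symm y))⁻¹ y :=
      HasDerivAt.of_local_left_inverse e.symm.continuous.continuousAt
        (hdf' (e.symm y)).hasDerivAt (ne_of_gt (hpos _))
        (Eventually.of_forall fun z => e.apply_symm_apply z)
    set g' := (deriv (deriv f) (e.symm y))⁻¹ with hg'def
    have h2 : HasDerivAt (fun z => f (e.symm z)) (deriv f (e.symm y) * g') y :=
      (hdf (e.symm y)).hasDerivAt.comp y hg'
    have h1 : HasDerivAt (fun z => z * e.symm z - f (e.symm z))
        (1 * e.symm y + y * g' - deriv f (e.symm y) * g') y :=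
      ((hasDerivAt_id y).mul hg').sub h2
    have hfun : legendre f = fun z => z * e.symm z - f (e.symm z) := funext hform
    rw [hfun]
    convert h1 using 1
    have hy : deriv f (e.symm y) = y := e.apply_symm_apply y
    rw [hy]; ring
  exact ⟨e.symm, e.symm.continuous, e.symm.monotone, fun x => e.symm_apply_apply x,
    fun y => e.apply_symm_apply y, hform, hderiv⟩


theorem stmt_9 (f : ℝ → ℝ) (hf : CondF f) (T : ℝ) (hT : 0 < T)
    (uT : ℝ → ℝ) (huT : Measurable uT) (C : ℝ) (hC : ∀ x, |uT x| ≤ C) (xc : ℝ)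
    (hO : Oleinik f T uT) :
    ∀ ξ : ℝ, ∃ x : ℝ, ξ ∈ MSet f T uT xc x := by
  obtain ⟨g, hgc, hgm, hgl, hgr, hform, hderiv⟩ := condF_facts f hf
  have hTne : T ≠ 0 := ne_of_gt hT
  intro ξ
  set x := ξ - T * deriv f (uT ξ) with hx
  refine ⟨x, ?_⟩
  have hkey : (ξ - x) / T = deriv f (uT ξ) := by
    rw [hx]; field_simp; ring
  -- derivative of φ s = T * legendre f ((s - x)/T)
  have hφ : ∀ s : ℝ, HasDerivAt (fun s => T * legendre f ((s - x) / T)) (g ((s - x) / T)) s := by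
    intro s
    have h1 : HasDerivAt (fun z : ℝ => (z - x) / T) (1 / T) s :=
      ((hasDerivAt_id s).sub_const x).div_const T
    have h2 := ((hderiv ((s - x) / T)).comp s h1).const_mul T
    rw [show T * (g ((s - x) / T) * (1 / T)) = g ((s - x) / T) by
      rw [mul_one_div, mul_div_assoc']; exact (div_eq_iff hTne).mpr (mul_comm _ _)] at h2
    exact h2
  have hgcont : Continuous fun s : ℝ => g ((s - x) / T) :=
    hgc.comp (by continuity)
  -- integrability of uT
  have hintOn : ∀ a b : ℝ, IntegrableOn uT (Set.Ioc a b) := by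
    intro a b
    refine Integrable.mono' (g := fun _ => C) (integrableOn_const (C := C) measure_Ioc_lt_top.ne)
      (huT.aestronglyMeasurable.restrict) (ae_of_all _ fun s => ?_)
    rw [Real.norm_eq_abs]; exact hC s
  have hint : ∀ a b : ℝ, IntervalIntegrable uT volume a b := fun a b => ⟨hintOn a b, hintOn b a⟩
  -- FTC
  have hftc : ∀ a b : ℝ, (∫ s in a..b, g ((s - x) / T)) =
      T * legendre f ((b - x) / T) - T * legendre f ((a - x) / T) := fun a b =>
    intervalIntegral.integral_eq_sub_of_hasDerivAt (fun s _ => hφ s)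
      (hgcont.intervalIntegrable a b)
  -- pointwise bounds from Oleinik
  have hptA : ∀ s, ξ ≤ s → uT s ≤ g ((s - x) / T) := by
    intro s hs
    rcases eq_or_lt_of_le hs with rfl | hlt
    · rw [hkey, hgl]
    · have h1 := hO ξ (s - ξ) (sub_pos.mpr hlt)
      rw [show ξ + (s - ξ) = s by ring] at h1
      have h2 : deriv f (uT s) ≤ (s - x) / T := by
        rw [← hkey] at h1
        have : (ξ - x) / T + (s - ξ) / T = (s - x) / T := by field_simp; ring
        linarith
      calc uT s = g (deriv f (uT s)) := (hgl _).symm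
        _ ≤ g ((s - x) / T) := hgm h2
  have hptB : ∀ s, s ≤ ξ → g ((s - x) / T) ≤ uT s := by
    intro s hs
    rcases eq_or_lt_of_le hs with rfl | hlt
    · rw [hkey, hgl]
    · have h1 := hO s (ξ - s) (sub_pos.mpr hlt)
      rw [show s + (ξ - s) = ξ by ring] at h1
      have h2 : (s - x) / T ≤ deriv f (uT s) := by
        rw [← hkey] at h1
        have : (ξ - x) / T - (ξ - s) / T = (s - x) / T := by field_simp; ring
        linarith
      calc g ((s - x) / T) ≤ g (deriv f (uT s)) := hgm h2
        _ = uT s := hgl _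
  -- main inequality: ξ maximizes
  have hmain : ∀ η : ℝ, UT uT xc η - T * legendre f ((η - x) / T) ≤
      UT uT xc ξ - T * legendre f ((ξ - x) / T) := by
    intro η
    have hdiff : UT uT xc η - UT uT xc ξ = ∫ s in ξ..η, uT s :=
      intervalIntegral.integral_interval_sub_left (hint xc η) (hint xc ξ)
    rcases le_total ξ η with h | h
    · have hmono := intervalIntegral.integral_mono_on h (hint ξ η)
        (hgcont.intervalIntegrable ξ η) (fun s hs => hptA s hs.1)
      rw [hftc] at hmono
      linarith
    · have hmono := intervalIntegral.integral_mono_on h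
        (hgcont.intervalIntegrable η ξ) (hint η ξ) (fun s hs => hptB s hs.2)
      rw [hftc] at hmono
      have hswap : (∫ s in ξ..η, uT s) = -∫ s in η..ξ, uT s :=
        intervalIntegral.integral_symm η ξ
      linarith
  have hsup : Uflat f T uT xc x = UT uT xc ξ - T * legendre f ((ξ - x) / T) := by
    have hbdd : BddAbove (Set.range fun η => UT uT xc η - T * legendre f ((η - x) / T)) := by
      refine ⟨UT uT xc ξ - T * legendre f ((ξ - x) / T), ?_⟩
      rintro v ⟨η, rfl⟩; exact hmain η
    exact le_antisymm (csSup_le (Set.range_nonempty _) (by rintro v ⟨η, rfl⟩; exact hmain η))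
      (le_csSup hbdd ⟨ξ, rfl⟩)
  show UT uT xc ξ = _
  rw [hsup]; ring
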